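/- The plus version of any transitive avoidance game is not a Player I win. -/

import Mathlib

/-- A strategy for the plus version of the game: given the history of (set-)moves so
far, choose the next set of points to claim. -/
abbrev PlusStrategy (X : Type*) := List (Finset X) → Finset X

/-- The set of all points claimed so far in a history. -/
def histUnion {X : Type*} [DecidableEq X] (h : List (Finset X)) : Finset X :=
  h.foldr (· ∪ ·) ∅

/-- A plus-strategy is valid if, whenever the board is not yet full, it picks a
nonempty set of previously unclaimed points. -/
def ValidPlusStrategy {X : Type*} [Fintype X] [DecidableEq X] (s : PlusStrategy X) : Prop :=
  ∀ h : List (Finset X), histUnion h ≠ Finset.univ →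
    (s h).Nonempty ∧ Disjoint (s h) (histUnion h)

/-- The play after `k` moves when Player I uses `sI` (moving at even times) and
Player II uses `sII` (moving at odd times); once the board is full the game is over
and we record empty moves. -/
def playPlus {X : Type*} [Fintype X] [DecidableEq X] (sI sII : PlusStrategy X) :
    ℕ → List (Finset X)
  | 0 => []
  | k + 1 =>
      let h := playPlus sI sII k
      h ++ [if histUnion h = Finset.univ then ∅
            else if k % 2 = 0 then sI h else sII h]

/-- The set of points claimed by Player I in a history: the union of the moves at
even positions. -/
def plusClaimedI {X : Type*} (h : List (Finset X)) : Set X :=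
  { x | ∃ i : ℕ, i % 2 = 0 ∧ ∃ S : Finset X, h[i]? = some S ∧ x ∈ S }

/-- The set of points claimed by Player II in a history: the union of the moves at
odd positions. -/
def plusClaimedII {X : Type*} (h : List (Finset X)) : Set X :=
  { x | ∃ i : ℕ, i % 2 = 1 ∧ ∃ S : Finset X, h[i]? = some S ∧ x ∈ S }

/-- A set of points contains a line of `ℒ`. -/
def ContainsLine {X : Type*} (ℒ : Set (Finset X)) (S : Set X) : Prop :=
  ∃ L ∈ ℒ, ↑L ⊆ S

/-- The plus version of the avoidance game with lines `ℒ` is a Player I win: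
Player I has a valid plus-strategy such that against every valid plus-strategy of
Player II there is a moment at which Player II's claimed set contains a line while
Player I's claimed set does not (by monotonicity of the claimed sets, this says
exactly that Player II's set comes to contain a line strictly before Player I's). -/
def PlusPIWin {X : Type*} [Fintype X] [DecidableEq X] (ℒ : Set (Finset X)) : Prop :=
  ∃ sI : PlusStrategy X, ValidPlusStrategy sI ∧
    ∀ sII : PlusStrategy X, ValidPlusStrategy sII →
      ∃ k : ℕ,
        ContainsLine ℒ (plusClaimedII (playPlus sI sII k)) ∧
        ¬ ContainsLine ℒ (plusClaimedI (playPlus sI sII k))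

/-- A permutation of the board is an automorphism of the game if it maps the family of
lines onto itself. -/
def IsGameAuto {X : Type*} [DecidableEq X] (ℒ : Set (Finset X)) (g : Equiv.Perm X) : Prop :=
  ∀ L : Finset X, L ∈ ℒ ↔ L.image g ∈ ℒ

/-- The game is transitive if its automorphism group acts transitively on the board. -/
def TransitiveGame {X : Type*} [DecidableEq X] (ℒ : Set (Finset X)) : Prop :=
  ∀ x y : X, ∃ g : Equiv.Perm X, IsGameAuto ℒ g ∧ g x = y

set_option linter.unusedSectionVars false

section Aux

variable {X : Type*} [Fintype X] [DecidableEq X]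

lemma histUnion_nil : histUnion ([] : List (Finset X)) = ∅ := rfl

lemma histUnion_cons (a : Finset X) (l : List (Finset X)) :
    histUnion (a :: l) = a ∪ histUnion l := rfl

lemma histUnion_concat (l : List (Finset X)) (a : Finset X) :
    histUnion (l ++ [a]) = histUnion l ∪ a := by
  induction l with
  | nil => simp [histUnion]
  | cons b l ih => simp [histUnion_cons, ih, Finset.union_assoc]

def wrapMove (S : Finset X) (h : List (Finset X)) : Finset X :=
  if S.Nonempty ∧ Disjoint S (histUnion h) then S else Finset.univ \ histUnion h

lemma wrapMove_valid (S : Finset X) (h : List (Finset X)) (hne : histUnion h ≠ Finset.univ) :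
    (wrapMove S h).Nonempty ∧ Disjoint (wrapMove S h) (histUnion h) := by
  unfold wrapMove
  split_ifs with hc
  · exact hc
  · refine ⟨Finset.sdiff_nonempty.mpr (fun hsub => hne (Finset.univ_subset_iff.mp hsub)), Finset.sdiff_disjoint⟩

lemma wrapMove_idem (S : Finset X) (h : List (Finset X)) (hne : histUnion h ≠ Finset.univ) :
    wrapMove (wrapMove S h) h = wrapMove S h := by
  have hF : (Finset.univ \ histUnion h).Nonempty ∧
      Disjoint (Finset.univ \ histUnion h) (histUnion h) :=
    ⟨Finset.sdiff_nonempty.mpr (fun hsub => hne (Finset.univ_subset_iff.mp hsub)),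
      Finset.sdiff_disjoint⟩
  by_cases hc : S.Nonempty ∧ Disjoint S (histUnion h)
  · rw [show wrapMove S h = S from if_pos hc]; exact if_pos hc
  · rw [show wrapMove S h = Finset.univ \ histUnion h from if_neg hc,
      show wrapMove (Finset.univ \ histUnion h) h = _ from if_pos hF]


def step (s : PlusStrategy X) (g : Equiv.Perm X) : ℕ → List (Finset X) × List (Finset X)
  | 0 => ([if histUnion ([] : List (Finset X)) = Finset.univ then ∅ else s []],
          ([] : List (Finset X)))
  | n + 1 =>
      let R := (step s g n).1
      let I := (step s g n).2
      if n % 2 = 0 then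
        let c := if histUnion I = Finset.univ then (∅ : Finset X) else s I
        let b := if histUnion R = Finset.univ then (∅ : Finset X)
                 else wrapMove (c.image g \ R.headI) R
        (R ++ [b], I ++ [c])
      else
        let a := if histUnion R = Finset.univ then (∅ : Finset X) else s R
        let d := if histUnion I = Finset.univ then (∅ : Finset X)
                 else wrapMove
                   ((if n = 1 then R.headI \ (I.headI.image g) else ∅).image (g⁻¹ : Equiv.Perm X)
                     ∪ a.image (g⁻¹ : Equiv.Perm X)) I
        (R ++ [a], I ++ [d])

variable (s : PlusStrategy X) (g : Equiv.Perm X)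

lemma step_len : ∀ n, ((step s g n).1.length = n + 1) ∧ ((step s g n).2.length = n) := by
  intro n
  induction n with
  | zero => simp [step]
  | succ n ih =>
      rw [step]
      by_cases hp : n % 2 = 0 <;> simp [hp, ih.1, ih.2]

/-- the real move at index `i` -/
def rE (i : ℕ) : Finset X := (step s g i).1.getD i ∅

/-- the imaginary move at index `m` -/
def iE (m : ℕ) : Finset X := (step s g (m + 1)).2.getD m ∅

lemma getD_concat {α : Type*} (l : List α) (a d : α) : (l ++ [a]).getD l.length d = a := by
  rw [List.getD_eq_getElem?_getD, List.getElem?_concat_length]; rfl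

lemma getD_append {α : Type*} (l l' : List α) (i : ℕ) (d : α) (h : i < l.length) :
    (l ++ l').getD i d = l.getD i d := by
  rw [List.getD_eq_getElem?_getD, List.getD_eq_getElem?_getD, List.getElem?_append_left h]

lemma step_succ (n : ℕ) : step s g (n + 1) =
    ((step s g n).1 ++ [rE s g (n + 1)], (step s g n).2 ++ [iE s g n]) := by
  obtain ⟨e, c, h⟩ : ∃ e c, step s g (n+1) = ((step s g n).1 ++ [e], (step s g n).2 ++ [c]) := by
    rw [step]; by_cases hp : n % 2 = 0 <;> simp [hp]
  have he : rE s g (n + 1) = e := by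
    rw [rE, h]
    have h2 := getD_concat (step s g n).1 e ∅
    rw [(step_len s g n).1] at h2
    exact h2
  have hc : iE s g n = c := by
    rw [iE, h]
    have h2 := getD_concat (step s g n).2 c ∅
    rw [(step_len s g n).2] at h2
    exact h2
  rw [h, he, hc]

lemma stepR_getD : ∀ n i, i ≤ n → (step s g n).1.getD i ∅ = rE s g i := by
  intro n
  induction n with
  | zero => intro i hi; interval_cases i; rfl
  | succ n ih =>
      intro i hi
      rcases Nat.lt_or_ge i (n + 1) with h | h
      · rw [step_succ, getD_append]
        · exact ih i (Nat.lt_succ_iff.mp h)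
        · rw [(step_len s g n).1]; exact h
      · have : i = n + 1 := le_antisymm hi h
        subst this; rfl

lemma stepI_getD : ∀ n m, m < n → (step s g n).2.getD m ∅ = iE s g m := by
  intro n
  induction n with
  | zero => intro m hm; omega
  | succ n ih =>
      intro m hm
      rcases Nat.lt_or_ge m n with h | h
      · rw [step_succ]
        simp only
        rw [getD_append]
        · exact ih m h
        · rw [(step_len s g n).2]; exact h
      · have : m = n := by omega
        subst this
        rw [step_succ]
        have h2 := getD_concat (step s g m).2 (iE s g m) ∅
        rw [(step_len s g m).2] at h2
        exact h2


lemma step_even (n : ℕ) (hp : n % 2 = 0) :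
    iE s g n = (if histUnion (step s g n).2 = Finset.univ then (∅ : Finset X)
        else s (step s g n).2) ∧
    rE s g (n + 1) = (if histUnion (step s g n).1 = Finset.univ then (∅ : Finset X)
      else wrapMove
        ((if histUnion (step s g n).2 = Finset.univ then (∅ : Finset X)
            else s (step s g n).2).image g \ (step s g n).1.headI) (step s g n).1) := by
  have h2 := step_succ s g n
  rw [step] at h2
  simp only [hp, if_pos, reduceIte] at h2
  simp at h2
  exact ⟨h2.2.symm, h2.1.symm⟩

lemma step_odd (n : ℕ) (hp : n % 2 = 1) :
    rE s g (n + 1) = (if histUnion (step s g n).1 = Finset.univ then (∅ : Finset X)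
        else s (step s g n).1) ∧
    iE s g n = (if histUnion (step s g n).2 = Finset.univ then (∅ : Finset X)
      else wrapMove
        ((if n = 1 then (step s g n).1.headI \ ((step s g n).2.headI.image g)
            else ∅).image (g⁻¹ : Equiv.Perm X)
          ∪ (if histUnion (step s g n).1 = Finset.univ then (∅ : Finset X)
              else s (step s g n).1).image (g⁻¹ : Equiv.Perm X)) (step s g n).2) := by
  have h2 := step_succ s g n
  rw [step] at h2
  have hp' : ¬ (n % 2 = 0) := by omega
  simp only [hp', if_neg, reduceIte] at h2
  simp at h2
  exact ⟨h2.1.symm, h2.2.symm⟩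

def tR : PlusStrategy X := fun h => wrapMove (rE s g h.length) h

def tI : PlusStrategy X := fun h => wrapMove (iE s g h.length) h

lemma tR_valid : ValidPlusStrategy (tR s g) := fun h hne => wrapMove_valid _ h hne

lemma tI_valid : ValidPlusStrategy (tI s g) := fun h hne => wrapMove_valid _ h hne

lemma play_tR : ∀ n, playPlus s (tR s g) (n + 1) = (step s g n).1 := by
  intro n
  induction n with
  | zero =>
      show ([] : List (Finset X)) ++ [_] = _
      simp only [List.nil_append, step]
      congr 1
  | succ n ih =>
      show playPlus s (tR s g) (n + 1) ++ [_] = _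
      rw [ih, step_succ]
      congr 1
      by_cases hfull : histUnion (step s g n).1 = Finset.univ
      · rw [if_pos hfull]
        by_cases hp : n % 2 = 0
        · rw [(step_even s g n hp).2, if_pos hfull]
        · rw [(step_odd s g n (by omega)).1, if_pos hfull]
      · rw [if_neg hfull]
        by_cases hp : n % 2 = 0
        · have hp1 : ¬ ((n + 1) % 2 = 0) := by omega
          rw [if_neg hp1]
          simp only [tR]
          rw [(step_len s g n).1, (step_even s g n hp).2, if_neg hfull,
            wrapMove_idem _ _ hfull]
        · have hp1 : (n + 1) % 2 = 0 := by omega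
          rw [if_pos hp1, (step_odd s g n (by omega)).1, if_neg hfull]

lemma play_tI : ∀ n, playPlus s (tI s g) n = (step s g n).2 := by
  intro n
  induction n with
  | zero => rfl
  | succ n ih =>
      show playPlus s (tI s g) n ++ [_] = _
      rw [ih, step_succ]
      congr 1
      by_cases hfull : histUnion (step s g n).2 = Finset.univ
      · rw [if_pos hfull]
        by_cases hp : n % 2 = 0
        · rw [(step_even s g n hp).1, if_pos hfull]
        · rw [(step_odd s g n (by omega)).2, if_pos hfull]
      · rw [if_neg hfull]
        by_cases hp : n % 2 = 0
        · rw [if_pos hp, (step_even s g n hp).1, if_neg hfull]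
        · have hp' : ¬ (n % 2 = 0) := hp
          rw [if_neg hp']
          simp only [tI]
          rw [(step_len s g n).2, (step_odd s g n (by omega)).2, if_neg hfull,
            wrapMove_idem _ _ hfull]


lemma headI_concat {α : Type*} [Inhabited α] (l : List α) (a : α) (h : l ≠ []) :
    (l ++ [a]).headI = l.headI := by
  cases l with
  | nil => exact absurd rfl h
  | cons b t => rfl

lemma img_inv (T : Finset X) : (T.image (g⁻¹ : Equiv.Perm X)).image g = T := by
  rw [Finset.image_image]
  have : ((g : X → X) ∘ (g⁻¹ : Equiv.Perm X)) = id := by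
    funext z; simp
  rw [this, Finset.image_id]

lemma inv_img (T : Finset X) : (T.image g).image (g⁻¹ : Equiv.Perm X) = T := by
  rw [Finset.image_image]
  have : (((g⁻¹ : Equiv.Perm X) : X → X) ∘ g) = id := by
    funext z; simp
  rw [this, Finset.image_id]

lemma image_univ_perm : (Finset.univ : Finset X).image (g : X → X) = Finset.univ := by
  apply Finset.eq_univ_of_forall
  intro z
  exact Finset.mem_image.mpr ⟨g⁻¹ z, Finset.mem_univ _, by simp⟩

lemma image_eq_univ_iff (T : Finset X) :
    T.image (g : X → X) = Finset.univ ↔ T = Finset.univ := by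
  constructor
  · intro h
    apply Finset.eq_univ_of_forall
    intro z
    have : g z ∈ T.image (g : X → X) := by rw [h]; exact Finset.mem_univ _
    obtain ⟨w, hw, hwz⟩ := Finset.mem_image.mp this
    rwa [g.injective hwz] at hw
  · intro h; rw [h]; exact image_univ_perm g

lemma disjoint_image_perm {T B : Finset X} :
    Disjoint (T.image (g : X → X)) (B.image (g : X → X)) ↔ Disjoint T B :=
  Finset.disjoint_image g.injective

lemma disjoint_inv_image {T B : Finset X} :
    Disjoint (T.image (g⁻¹ : Equiv.Perm X)) B ↔ Disjoint T (B.image (g : X → X)) := by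
  rw [← disjoint_image_perm g (T := T.image (g⁻¹ : Equiv.Perm X)) (B := B), img_inv]

lemma not_subset_image (A : Finset X) (x : X) (hx : x ∈ A) (hy : g x ∉ A) :
    ¬ A ⊆ A.image g := by
  intro hsub
  have hcard : (A.image (g : X → X)).card ≤ A.card :=
    le_of_eq (Finset.card_image_of_injective _ g.injective)
  have heq : A = A.image g := Finset.eq_of_subset_of_card_le hsub hcard
  exact hy (heq ▸ Finset.mem_image_of_mem _ hx)

lemma histUnion_singleton (a : Finset X) : histUnion [a] = a := by
  simp [histUnion]



lemma setid1 (A B r : Finset X) : (A ∪ B) ∪ r = A ∪ (B ∪ ((A \ B) ∪ r)) := by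
  ext z; simp only [Finset.mem_union, Finset.mem_sdiff]; tauto

lemma setid2 (A B r : Finset X) : A ⊆ B ∪ ((A \ B) ∪ r) := by
  intro z hz; simp only [Finset.mem_union, Finset.mem_sdiff]; tauto

lemma setid3 (A B r : Finset X) : (A \ B) ∪ r ⊆ A ∪ r := by
  intro z hz; simp only [Finset.mem_union, Finset.mem_sdiff] at hz ⊢; tauto

lemma main_inv (hs : ValidPlusStrategy s)
    (hEmp : histUnion ([] : List (Finset X)) ≠ Finset.univ)
    (hA : s [] ≠ Finset.univ) (x : X) (hx : x ∈ s []) (hy : g x ∉ s []) : ∀ n,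
    (histUnion (step s g n).1 = s [] ∪ (histUnion (step s g n).2).image g)
  ∧ (2 ≤ n → s [] ⊆ (histUnion (step s g n).2).image g)
  ∧ ((step s g n).1.headI = s [])
  ∧ (n = 1 → (step s g n).2.headI = s [] ∧ histUnion (step s g n).2 = s [])
  ∧ (∀ i, i ≤ n → i % 2 = 1 → rE s g i ⊆ (iE s g (i - 1)).image g)
  ∧ (∀ m, m + 1 ≤ n → m % 2 = 1 → (iE s g m).image g ⊆ s [] ∪ rE s g (m + 1)) := by
  intro n
  induction n with
  | zero =>
      refine ⟨?_, by omega, ?_, by omega, ?_, by omega⟩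
      · show histUnion [if histUnion ([] : List (Finset X)) = Finset.univ then ∅ else s []] = _
        rw [if_neg hEmp, histUnion_singleton]
        show _ = s [] ∪ (histUnion ([] : List (Finset X))).image g
        rw [histUnion_nil]
        simp
      · show List.headI [if histUnion ([] : List (Finset X)) = Finset.univ then ∅ else s []] = _
        rw [if_neg hEmp]
        rfl
      · intro i hi hodd; omega
  | succ n ih =>
      obtain ⟨q1, q2, q3, q4, q5, q6⟩ := ih
      have hstep := step_succ s g n
      have hlenR := (step_len s g n).1
      have hlenI := (step_len s g n).2
      have hUR : histUnion (step s g (n + 1)).1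
          = histUnion (step s g n).1 ∪ rE s g (n + 1) := by
        rw [hstep]; exact histUnion_concat _ _
      have hUI : histUnion (step s g (n + 1)).2
          = histUnion (step s g n).2 ∪ iE s g n := by
        rw [hstep]; exact histUnion_concat _ _
      have hq3 : (step s g (n + 1)).1.headI = s [] := by
        rw [hstep]
        show ((step s g n).1 ++ [rE s g (n + 1)]).headI = _
        rw [headI_concat _ _ (by intro h; rw [h] at hlenR; simp at hlenR)]
        exact q3
      have key :
          (histUnion (step s g (n + 1)).1
            = s [] ∪ (histUnion (step s g (n + 1)).2).image g)
        ∧ (s [] ⊆ (histUnion (step s g (n + 1)).2).image g ∨ n = 0)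
        ∧ (n = 0 → (step s g (n + 1)).2.headI = s []
            ∧ histUnion (step s g (n + 1)).2 = s [])
        ∧ (n % 2 = 0 → rE s g (n + 1) ⊆ (iE s g n).image g)
        ∧ (n % 2 = 1 → (iE s g n).image g ⊆ s [] ∪ rE s g (n + 1)) := by
        by_cases np : n % 2 = 0
        · have hiE := (step_even s g n np).1
          have hrE := (step_even s g n np).2
          rcases Nat.eq_zero_or_pos n with h0 | hpos
          · subst h0
            have h02 : (step s g 0).2 = ([] : List (Finset X)) := rfl
            rw [h02] at hiE hrE
            have hEmp' : histUnion ([] : List (Finset X)) ≠ Finset.univ := hEmp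
            have hiE0 : iE s g 0 = s [] := by rw [hiE, if_neg hEmp']
            have hU0I : histUnion (step s g 0).2 = ∅ := rfl
            have hU0R : histUnion (step s g 0).1 = s [] := by
              rw [q1, hU0I]; simp
            have hfullR : histUnion (step s g 0).1 ≠ Finset.univ := by
              rw [hU0R]; exact hA
            have hw : ((s []).image g \ s []).Nonempty
                ∧ Disjoint ((s []).image g \ s []) (histUnion (step s g 0).1) := by
              constructor
              · exact ⟨g x, Finset.mem_sdiff.mpr ⟨Finset.mem_image_of_mem _ hx, hy⟩⟩
              · rw [hU0R]; exact Finset.sdiff_disjoint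
            have hrE1 : rE s g 1 = (s []).image g \ s [] := by
              rw [hrE, if_neg hfullR, if_neg hEmp', q3]
              exact if_pos hw
            have hstep2 : (step s g 1).2 = [s []] := by
              rw [hstep, hiE0]; rfl
            refine ⟨?_, Or.inr rfl, ?_, ?_, ?_⟩
            · rw [hUR, hUI, hU0R, hU0I, hrE1, hiE0]
              rw [Finset.union_sdiff_self_eq_union]
              simp
            · intro _
              constructor
              · rw [hstep2]; rfl
              · rw [hstep2, histUnion_singleton]
            · intro _
              rw [hrE1, hiE0]
              exact Finset.sdiff_subset
            · intro h; omega
          · have h2 : 2 ≤ n := by omega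
            have q2' := q2 h2
            have habs : histUnion (step s g n).1
                = (histUnion (step s g n).2).image g := by
              rw [q1]; exact Finset.union_eq_right.mpr q2'
            by_cases hfull : histUnion (step s g n).1 = Finset.univ
            · have hfullI : histUnion (step s g n).2 = Finset.univ :=
                (image_eq_univ_iff g _).mp (by rw [← habs]; exact hfull)
              have hiE0 : iE s g n = ∅ := by rw [hiE, if_pos hfullI]
              have hrE0 : rE s g (n + 1) = ∅ := by rw [hrE, if_pos hfull]
              refine ⟨?_, Or.inl ?_, by omega, ?_, by omega⟩
              · rw [hUR, hUI, hrE0, hiE0]; simpa using q1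
              · rw [hUI]
                exact q2'.trans (Finset.image_subset_image Finset.subset_union_left)
              · intro _; rw [hrE0]; exact Finset.empty_subset _
            · have hfullI : histUnion (step s g n).2 ≠ Finset.univ := by
                intro h
                exact hfull (by rw [habs, h, image_univ_perm])
              have hiEn : iE s g n = s (step s g n).2 := by rw [hiE, if_neg hfullI]
              have hsII := hs (step s g n).2 hfullI
              have hdg : Disjoint ((s (step s g n).2).image g)
                  ((histUnion (step s g n).2).image g) :=
                (disjoint_image_perm g).mpr hsII.2
              have hdisjA : Disjoint ((s (step s g n).2).image g) (s []) :=
                hdg.mono_right q2'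
              have hsd : (s (step s g n).2).image g \ s [] = (s (step s g n).2).image g :=
                Finset.sdiff_eq_self_iff_disjoint.mpr hdisjA
              have hw : ((s (step s g n).2).image g \ s []).Nonempty
                  ∧ Disjoint ((s (step s g n).2).image g \ s [])
                      (histUnion (step s g n).1) := by
                rw [hsd]
                constructor
                · exact hsII.1.image g
                · rw [q1]
                  exact Finset.disjoint_union_right.mpr ⟨hdisjA, hdg⟩
              have hrEn : rE s g (n + 1) = (s (step s g n).2).image g := by
                rw [hrE, if_neg hfull, if_neg hfullI, q3]
                rw [show wrapMove ((s (step s g n).2).image g \ s []) (step s g n).1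
                    = (s (step s g n).2).image g \ s [] from if_pos hw, hsd]
              refine ⟨?_, Or.inl ?_, by omega, ?_, by omega⟩
              · rw [hUR, hUI, hrEn, hiEn, q1, Finset.image_union, Finset.union_assoc]
              · rw [hUI]
                exact q2'.trans (Finset.image_subset_image Finset.subset_union_left)
              · intro _; rw [hrEn, hiEn]
        · have np' : n % 2 = 1 := by omega
          have hrE := (step_odd s g n np').1
          have hiE := (step_odd s g n np').2
          rcases eq_or_ne n 1 with h1 | h1
          · subst h1
            have q4' := q4 rfl
            have hfullI : histUnion (step s g 1).2 ≠ Finset.univ := by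
              rw [q4'.2]; exact hA
            have hUR1 : histUnion (step s g 1).1 = s [] ∪ (s []).image g := by
              rw [q1, q4'.2]
            have ha_disj : Disjoint (rE s g (1 + 1)) (histUnion (step s g 1).1) := by
              rw [hrE]
              split_ifs with h
              · simp
              · exact (hs _ h).2
            have hA_not_sub := not_subset_image g (s []) x hx hy
            have hsdne : (s [] \ (s []).image g).Nonempty :=
              Finset.sdiff_nonempty.mpr hA_not_sub
            have hw : ((s [] \ (s []).image g).image (g⁻¹ : Equiv.Perm X)
                  ∪ (rE s g (1 + 1)).image (g⁻¹ : Equiv.Perm X)).Nonempty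
                ∧ Disjoint ((s [] \ (s []).image g).image (g⁻¹ : Equiv.Perm X)
                  ∪ (rE s g (1 + 1)).image (g⁻¹ : Equiv.Perm X))
                  (histUnion (step s g 1).2) := by
              constructor
              · exact (hsdne.image _).mono Finset.subset_union_left
              · rw [q4'.2]
                refine Finset.disjoint_union_left.mpr ⟨?_, ?_⟩
                · rw [disjoint_inv_image g]
                  exact Finset.sdiff_disjoint
                · rw [disjoint_inv_image g]
                  refine Disjoint.mono_right ?_ ha_disj
                  rw [hUR1]
                  exact Finset.subset_union_right
            have hiE1 : iE s g 1 = (s [] \ (s []).image g).image (g⁻¹ : Equiv.Perm X)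
                ∪ (rE s g (1 + 1)).image (g⁻¹ : Equiv.Perm X) := by
              rw [hiE, if_neg hfullI, if_pos rfl, q3, q4'.1, ← hrE]
              exact if_pos hw
            refine ⟨?_, Or.inl ?_, by omega, by omega, ?_⟩
            · rw [hUR, hUI, hUR1, q4'.2, hiE1, Finset.image_union, Finset.image_union,
                img_inv g, img_inv g]
              exact setid1 _ _ _
            · rw [hUI, q4'.2, hiE1, Finset.image_union, Finset.image_union,
                img_inv g, img_inv g]
              exact setid2 _ _ _
            · intro _
              rw [hiE1, Finset.image_union, img_inv g, img_inv g]
              exact setid3 _ _ _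
          · have h3 : 3 ≤ n := by omega
            have q2' := q2 (by omega)
            have habs : histUnion (step s g n).1
                = (histUnion (step s g n).2).image g := by
              rw [q1]; exact Finset.union_eq_right.mpr q2'
            by_cases hfull : histUnion (step s g n).1 = Finset.univ
            · have hfullI : histUnion (step s g n).2 = Finset.univ :=
                (image_eq_univ_iff g _).mp (by rw [← habs]; exact hfull)
              have hiE0 : iE s g n = ∅ := by rw [hiE, if_pos hfullI]
              have hrE0 : rE s g (n + 1) = ∅ := by rw [hrE, if_pos hfull]
              refine ⟨?_, Or.inl ?_, by omega, by omega, ?_⟩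
              · rw [hUR, hUI, hrE0, hiE0]; simpa using q1
              · rw [hUI]
                exact q2'.trans (Finset.image_subset_image Finset.subset_union_left)
              · intro _; rw [hiE0]; simp
            · have hfullI : histUnion (step s g n).2 ≠ Finset.univ := by
                intro h
                exact hfull (by rw [habs, h, image_univ_perm])
              have hsI := hs (step s g n).1 hfull
              have hrEn : rE s g (n + 1) = s (step s g n).1 := by
                rw [hrE, if_neg hfull]
              have hw : ((if n = 1 then (step s g n).1.headI \ ((step s g n).2.headI.image g)
                    else ∅).image (g⁻¹ : Equiv.Perm X)
                  ∪ (s (step s g n).1).image (g⁻¹ : Equiv.Perm X)).Nonempty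
                ∧ Disjoint ((if n = 1 then (step s g n).1.headI \ ((step s g n).2.headI.image g)
                    else ∅).image (g⁻¹ : Equiv.Perm X)
                  ∪ (s (step s g n).1).image (g⁻¹ : Equiv.Perm X))
                    (histUnion (step s g n).2) := by
                rw [if_neg h1]
                constructor
                · exact (hsI.1.image _).mono Finset.subset_union_right
                · simp only [Finset.image_empty, Finset.empty_union]
                  rw [disjoint_inv_image g, ← habs]
                  exact hsI.2
              have hiEn : iE s g n = (s (step s g n).1).image (g⁻¹ : Equiv.Perm X) := by
                rw [hiE, if_neg hfullI, if_neg hfull]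
                rw [show wrapMove _ (step s g n).2 = _ from if_pos hw, if_neg h1]
                simp
              refine ⟨?_, Or.inl ?_, by omega, by omega, ?_⟩
              · rw [hUR, hUI, hrEn, hiEn, Finset.image_union, img_inv, ← Finset.union_assoc,
                  ← q1]
              · rw [hUI]
                exact q2'.trans (Finset.image_subset_image Finset.subset_union_left)
              · intro _
                rw [hiEn, img_inv, hrEn]
                exact Finset.subset_union_right
      refine ⟨key.1, fun h2 => ?_, hq3, fun h1 => key.2.2.1 (by omega), ?_, ?_⟩
      · rcases key.2.1 with h | h
        · exact h
        · omega
      · intro i hi hodd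
        rcases Nat.lt_or_ge i (n + 1) with h | h
        · exact q5 i (by omega) hodd
        · have : i = n + 1 := by omega
          subst this
          have np : n % 2 = 0 := by omega
          have := key.2.2.2.1 np
          simpa using this
      · intro m hm hodd
        rcases Nat.lt_or_ge (m + 1) (n + 1) with h | h
        · exact q6 m (by omega) hodd
        · have : m = n := by omega
          subst this
          exact key.2.2.2.2 hodd


lemma rE_zero (hEmp : histUnion ([] : List (Finset X)) ≠ Finset.univ) :
    rE s g 0 = s [] := by
  have h0 : (step s g 0).1
      = [if histUnion ([] : List (Finset X)) = Finset.univ then ∅ else s []] := rfl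
  rw [rE, h0, if_neg hEmp]
  rfl

lemma auto_inv {ℒ : Set (Finset X)} (hauto : IsGameAuto ℒ g) {L : Finset X} (hL : L ∈ ℒ) :
    L.image (g⁻¹ : Equiv.Perm X) ∈ ℒ := by
  have h := hauto (L.image (g⁻¹ : Equiv.Perm X))
  rw [img_inv g] at h
  exact h.mpr hL

lemma get?_eq_getD (l : List (Finset X)) (n : ℕ) (h : n < l.length) :
    l[n]? = some (l.getD n ∅) := by
  cases hval : l[n]? with
  | none =>
      rw [List.getElem?_eq_none_iff] at hval
      omega
  | some a =>
      rw [List.getD_eq_getElem?_getD, hval]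
      rfl

lemma containsLine_mono {ℒ : Set (Finset X)} {S T : Set X} (h : S ⊆ T) :
    ContainsLine ℒ S → ContainsLine ℒ T :=
  fun ⟨L, hL, hsub⟩ => ⟨L, hL, hsub.trans h⟩

lemma plusClaimedI_append (h l : List (Finset X)) :
    plusClaimedI h ⊆ plusClaimedI (h ++ l) := by
  rintro z ⟨i, hp, S, hg, hz⟩
  obtain ⟨hlt, -⟩ := List.getElem?_eq_some_iff.mp hg
  exact ⟨i, hp, S, by rw [List.getElem?_append_left hlt]; exact hg, hz⟩

lemma plusClaimedII_append (h l : List (Finset X)) :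
    plusClaimedII h ⊆ plusClaimedII (h ++ l) := by
  rintro z ⟨i, hp, S, hg, hz⟩
  obtain ⟨hlt, -⟩ := List.getElem?_eq_some_iff.mp hg
  exact ⟨i, hp, S, by rw [List.getElem?_append_left hlt]; exact hg, hz⟩

lemma playPlus_succ (sI sII : PlusStrategy X) (k : ℕ) :
    playPlus sI sII (k + 1) = playPlus sI sII k
      ++ [if histUnion (playPlus sI sII k) = Finset.univ then ∅
          else if k % 2 = 0 then sI (playPlus sI sII k) else sII (playPlus sI sII k)] := rfl

lemma playPlus_prefix (sI sII : PlusStrategy X) {m n : ℕ} (h : m ≤ n) :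
    ∃ l, playPlus sI sII n = playPlus sI sII m ++ l := by
  induction n with
  | zero =>
      have : m = 0 := by omega
      subst this
      exact ⟨[], rfl⟩
  | succ n ih =>
      rcases Nat.lt_or_ge m (n + 1) with h' | h'
      · obtain ⟨l, hl⟩ := ih (by omega)
        exact ⟨l ++ [_], by rw [playPlus_succ, hl, List.append_assoc]⟩
      · have : m = n + 1 := by omega
        subst this
        exact ⟨[], by simp⟩

lemma playPlus_length (sI sII : PlusStrategy X) : ∀ k, (playPlus sI sII k).length = k := by
  intro k
  induction k with
  | zero => rfl
  | succ k ih => rw [playPlus_succ]; simp [ih]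

lemma corner_full (sI sII : PlusStrategy X)
    (hfull : histUnion (playPlus sI sII 1) = Finset.univ) :
    ∀ k, 1 ≤ k → histUnion (playPlus sI sII k) = Finset.univ := by
  intro k
  induction k with
  | zero => omega
  | succ k ih =>
      intro _
      rcases Nat.eq_zero_or_pos k with h0 | hpos
      · subst h0; exact hfull
      · rw [playPlus_succ, histUnion_concat, ih hpos]
        simp

lemma corner_empty (sI sII : PlusStrategy X)
    (hfull : histUnion (playPlus sI sII 1) = Finset.univ) :
    ∀ k i S, 1 ≤ i → (playPlus sI sII k)[i]? = some S → S = ∅ := by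
  intro k
  induction k with
  | zero => intro i S _ hg; simp [playPlus] at hg
  | succ k ih =>
      intro i S hi hg
      rw [playPlus_succ] at hg
      rcases Nat.lt_or_ge i (playPlus sI sII k).length with hlt | hge
      · rw [List.getElem?_append_left hlt] at hg
        exact ih i S hi hg
      · obtain ⟨hlt2, -⟩ := List.getElem?_eq_some_iff.mp hg
        simp only [List.length_append, List.length_singleton, playPlus_length] at hlt2 hge
        have hik : i = k := by omega
        subst hik
        have hlen := playPlus_length sI sII i
        rw [List.getElem?_append_right (by omega)] at hg
        rw [hlen, Nat.sub_self] at hg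
        simp only [List.getElem?_cons_zero] at hg
        have hu := corner_full sI sII hfull i hi
        rw [if_pos hu] at hg
        exact Option.some_inj.mp hg.symm

end Aux

/-- The plus version of any transitive avoidance game is not a Player I win. -/
theorem statement3 {X : Type*} [Fintype X] [DecidableEq X] (ℒ : Set (Finset X))
    (htrans : TransitiveGame ℒ) : ¬ PlusPIWin ℒ := by
  rintro ⟨s, hs, hwin⟩
  classical
  set t0 : PlusStrategy X := fun h => Finset.univ \ histUnion h with ht0
  have ht0valid : ValidPlusStrategy t0 := fun h hne =>
    ⟨Finset.sdiff_nonempty.mpr (fun hsub => hne (Finset.univ_subset_iff.mp hsub)),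
      Finset.sdiff_disjoint⟩
  by_cases hfull1 : histUnion (playPlus s t0 1) = Finset.univ
  · obtain ⟨k, ⟨L, hLmem, hLsub⟩, hnot⟩ := hwin t0 ht0valid
    apply hnot
    refine ⟨L, hLmem, ?_⟩
    intro z hz
    obtain ⟨i, hodd, S, hget, hzS⟩ := hLsub hz
    have hS : S = ∅ := corner_empty s t0 hfull1 k i S (by omega) hget
    rw [hS] at hzS
    simp at hzS
  · -- main case
    have h1eq : playPlus s t0 1
        = [if histUnion ([] : List (Finset X)) = Finset.univ then ∅ else s []] := rfl
    have hEmp : histUnion ([] : List (Finset X)) ≠ Finset.univ := by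
      intro h
      apply hfull1
      rw [h1eq, if_pos h, histUnion_singleton]
      rw [histUnion_nil] at h
      exact h.symm ▸ rfl
    have hA1 : s [] ≠ Finset.univ := by
      intro h
      apply hfull1
      rw [h1eq, if_neg hEmp, histUnion_singleton, h]
    obtain ⟨x, hx⟩ := (hs [] hEmp).1
    obtain ⟨y, hy⟩ : ∃ y, y ∉ s [] := by
      by_contra h
      push_neg at h
      exact hA1 (Finset.eq_univ_iff_forall.mpr h)
    obtain ⟨g, hauto, hgx⟩ := htrans x y
    have hy' : g x ∉ s [] := hgx ▸ hy
    have inv := main_inv s g hs hEmp hA1 x hx hy'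
    obtain ⟨k, ⟨L, hLmem, hLsub⟩, hnotI⟩ := hwin (tR s g) (tR_valid s g)
    rcases Nat.eq_zero_or_pos k with hk0 | hkpos
    · subst hk0
      apply hnotI
      refine ⟨L, hLmem, ?_⟩
      intro z hz
      obtain ⟨i, hodd, S, hget, hzS⟩ := hLsub hz
      simp [playPlus] at hget
    obtain ⟨k', rfl⟩ : ∃ k', k = k' + 1 := ⟨k - 1, by omega⟩
    have hplayR : playPlus s (tR s g) (k' + 1) = (step s g k').1 := play_tR s g k'
    have hplayI : playPlus s (tI s g) k' = (step s g k').2 := play_tI s g k'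
    -- (a) imaginary Player I's claimed set contains a line at time k'
    have hContI : ContainsLine ℒ (plusClaimedI (playPlus s (tI s g) k')) := by
      refine ⟨L.image (g⁻¹ : Equiv.Perm X), auto_inv g hauto hLmem, ?_⟩
      intro z hz
      obtain ⟨w, hwL, rfl⟩ := Finset.mem_image.mp (Finset.mem_coe.mp hz)
      obtain ⟨i, hodd, S, hget, hwS⟩ := hLsub (Finset.mem_coe.mpr hwL)
      rw [hplayR] at hget
      obtain ⟨hlt, -⟩ := List.getElem?_eq_some_iff.mp hget
      rw [(step_len s g k').1] at hlt
      have hSval : S = rE s g i := by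
        have h2 := stepR_getD s g k' i (by omega)
        rw [List.getD_eq_getElem?_getD, hget] at h2
        exact (Option.getD_some ▸ h2 : _)
      have hsub := (inv k').2.2.2.2.1 i (by omega) hodd
      have hwmem : w ∈ (iE s g (i - 1)).image g := hsub (hSval ▸ hwS)
      obtain ⟨v, hv, hvw⟩ := Finset.mem_image.mp hwmem
      have hveq : (g⁻¹ : Equiv.Perm X) w = v := by rw [← hvw]; simp
      refine ⟨i - 1, by omega, iE s g (i - 1), ?_, hveq ▸ hv⟩
      rw [hplayI]
      have hlt2 : i - 1 < (step s g k').2.length := by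
        rw [(step_len s g k').2]; omega
      rw [get?_eq_getD _ _ hlt2, stepI_getD s g k' (i - 1) (by omega)]
    -- (b) imaginary Player II's claimed set contains no line at time k'
    have hnotII : ¬ ContainsLine ℒ (plusClaimedII (playPlus s (tI s g) k')) := by
      rintro ⟨L', hL'mem, hL'sub⟩
      apply hnotI
      refine ⟨L'.image g, (hauto L').mp hL'mem, ?_⟩
      intro z hz
      obtain ⟨w, hwL, rfl⟩ := Finset.mem_image.mp (Finset.mem_coe.mp hz)
      obtain ⟨m, hodd, S, hget, hwS⟩ := hL'sub (Finset.mem_coe.mpr hwL)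
      rw [hplayI] at hget
      obtain ⟨hlt, -⟩ := List.getElem?_eq_some_iff.mp hget
      rw [(step_len s g k').2] at hlt
      have hSval : S = iE s g m := by
        have h2 := stepI_getD s g k' m hlt
        rw [List.getD_eq_getElem?_getD, hget] at h2
        exact (Option.getD_some ▸ h2 : _)
      have hsub6 := (inv k').2.2.2.2.2 m (by omega) hodd
      have hzin : g w ∈ s [] ∪ rE s g (m + 1) :=
        hsub6 (Finset.mem_image_of_mem _ (hSval ▸ hwS))
      rcases Finset.mem_union.mp hzin with h | h
      · refine ⟨0, by omega, rE s g 0, ?_, (rE_zero s g hEmp).symm ▸ h⟩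
        rw [hplayR]
        have hlt2 : 0 < (step s g k').1.length := by
          rw [(step_len s g k').1]; omega
        rw [get?_eq_getD _ _ hlt2, stepR_getD s g k' 0 (by omega)]
      · refine ⟨m + 1, by omega, rE s g (m + 1), ?_, h⟩
        rw [hplayR]
        have hlt2 : m + 1 < (step s g k').1.length := by
          rw [(step_len s g k').1]; omega
        rw [get?_eq_getD _ _ hlt2, stepR_getD s g k' (m + 1) (by omega)]
    -- contradiction with the imaginary game
    obtain ⟨m, hc2, hnc1⟩ := hwin (tI s g) (tI_valid s g)
    rcases le_or_gt m k' with h | h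
    · obtain ⟨l, hl⟩ := playPlus_prefix s (tI s g) h
      exact hnotII (containsLine_mono (hl ▸ plusClaimedII_append _ l) hc2)
    · obtain ⟨l, hl⟩ := playPlus_prefix s (tI s g) (le_of_lt h)
      exact hnc1 (containsLine_mono (hl ▸ plusClaimedI_append _ l) hContI)
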